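/- For any topological space X, the upper Vietoris topology on K(A(X)) coincides with the weak topology (generated by complements of principal downsets). -/

import Mathlib

open Set Topology

/-- The lower powerspace: closed subsets of `X`. -/
def LowerPS (X : Type*) [TopologicalSpace X] : Type _ := {A : Set X // IsClosed A}

/-- Lower Vietoris topology, generated by the sets `◇U = {A | A ∩ U ≠ ∅}` for `U` open. -/
instance (X : Type*) [TopologicalSpace X] : TopologicalSpace (LowerPS X) :=
  .generateFrom {S | ∃ U : Set X, IsOpen U ∧ S = {A : LowerPS X | (A.1 ∩ U).Nonempty}}

/-- The upper powerspace: compact saturated subsets of `X`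
(saturated = intersection of all open neighborhoods). -/
def UpperPS (X : Type*) [TopologicalSpace X] : Type _ :=
  {K : Set X // IsCompact K ∧ K = ⋂₀ {U : Set X | IsOpen U ∧ K ⊆ U}}

/-- Upper Vietoris topology, generated by the sets `□U = {K | K ⊆ U}` for `U` open. -/
instance (X : Type*) [TopologicalSpace X] : TopologicalSpace (UpperPS X) :=
  .generateFrom {S | ∃ U : Set X, IsOpen U ∧ S = {K : UpperPS X | K.1 ⊆ U}}

/-- A `Π⁰₂` subset. -/
def IsPi02 {Y : Type*} [TopologicalSpace Y] (S : Set Y) : Prop :=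
  ∃ U V : ℕ → Set Y, (∀ i, IsOpen (U i)) ∧ (∀ i, IsOpen (V i)) ∧
    ∀ y, y ∈ S ↔ ∀ i, y ∈ U i → y ∈ V i

/-- The Scott topology on `P(ω)`, generated by the sets `{x | F ⊆ x}` for finite `F`. -/
instance : TopologicalSpace (Set ℕ) :=
  .generateFrom {S | ∃ F : Finset ℕ, S = {x : Set ℕ | ↑F ⊆ x}}

/-- A space is quasi-Polish iff it is homeomorphic to a `Π⁰₂` subspace of `P(ω)`
with the Scott topology. -/
def QuasiPolish (X : Type*) [TopologicalSpace X] : Prop :=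
  ∃ S : Set (Set ℕ), IsPi02 S ∧ Nonempty (X ≃ₜ S)

/-- Scott-open subsets of a preorder. -/
def IsScottOpen {α : Type*} [Preorder α] (U : Set α) : Prop :=
  (∀ ⦃a b : α⦄, a ≤ b → a ∈ U → b ∈ U) ∧
  ∀ d : Set α, d.Nonempty → DirectedOn (· ≤ ·) d → ∀ a : α, IsLUB d a → a ∈ U →
    (d ∩ U).Nonempty

/-- The Scott topology on a preorder. -/
def scottTop (α : Type*) [Preorder α] : TopologicalSpace α := .generateFrom {U | IsScottOpen U}

/-- The frame of open subsets of `X`, ordered by inclusion. -/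
def OpensT (X : Type*) [TopologicalSpace X] : Type _ := {U : Set X // IsOpen U}

instance (X : Type*) [TopologicalSpace X] : PartialOrder (OpensT X) :=
  inferInstanceAs (PartialOrder {U : Set X // IsOpen U})

/-- `O(X)` carries the Scott topology. -/
instance (X : Type*) [TopologicalSpace X] : TopologicalSpace (OpensT X) := scottTop (OpensT X)

/-- `□◇U` in `K(A(X))`. -/
def boxDia {X : Type*} [TopologicalSpace X] (U : Set X) : Set (UpperPS (LowerPS X)) :=
  {𝒦 | ∀ A ∈ 𝒦.1, ((A : LowerPS X).1 ∩ U).Nonempty}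

/-- `◇□U` in `A(K(X))`. -/
def diaBox {X : Type*} [TopologicalSpace X] (U : Set X) : Set (LowerPS (UpperPS X)) :=
  {𝒜 | ∃ K ∈ 𝒜.1, (K : UpperPS X).1 ⊆ U}

/-- A space is consonant iff every Scott-open family of opens containing `U` contains
a compact-saturated filter neighborhood `▽K` of `U`. -/
def Consonant (X : Type*) [TopologicalSpace X] : Prop :=
  ∀ H : Set (OpensT X), IsScottOpen H → ∀ U ∈ H,
    ∃ K : UpperPS X, K.1 ⊆ U.1 ∧ ∀ V : OpensT X, K.1 ⊆ V.1 → V ∈ H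

/-- A space is co-consonant. -/
def CoConsonant (Y : Type*) [TopologicalSpace Y] : Prop :=
  ∀ H : Set (OpensT Y), IsScottOpen H → ∀ U ∈ H,
    ∃ F : Finset (Set Y), (∀ A ∈ F, IsClosed A) ∧ (∀ A ∈ F, (U.1 ∩ A).Nonempty) ∧
      ∀ V : OpensT Y, (∀ A ∈ F, (V.1 ∩ A).Nonempty) → V ∈ H



section AuxProof

open TopologicalSpace

variable {X : Type*} [TopologicalSpace X]

/-- Every open set of the lower powerspace is an upper set for inclusion. -/
lemma lowerPS_isOpen_upper {𝒰 : Set (LowerPS X)} (h : IsOpen 𝒰)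
    {A B : LowerPS X} (hAB : A.1 ⊆ B.1) (hA : A ∈ 𝒰) : B ∈ 𝒰 := by
  have h' : GenerateOpen
      {S | ∃ U : Set X, IsOpen U ∧ S = {A : LowerPS X | (A.1 ∩ U).Nonempty}} 𝒰 := h
  clear h
  revert hA
  induction h' with
  | basic s hs =>
    intro hA
    obtain ⟨U, hU, rfl⟩ := hs
    exact hA.mono (inter_subset_inter_left _ hAB)
  | univ => intro _; trivial
  | inter s t _ _ ihs iht => intro hA; exact ⟨ihs hA.1, iht hA.2⟩
  | sUnion S _ ih =>
    rintro ⟨s, hs, hAs⟩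
    exact ⟨s, hs, ih s hs hAs⟩

/-- A compact saturated set of closed sets is an upper set for inclusion. -/
lemma upperPS_mem_of_subset (𝒦 : UpperPS (LowerPS X)) {A B : LowerPS X}
    (hA : A ∈ 𝒦.1) (hAB : A.1 ⊆ B.1) : B ∈ 𝒦.1 := by
  have hsat := 𝒦.2.2
  rw [hsat]
  rintro U ⟨hUopen, hKU⟩
  rw [hsat] at hA
  exact lowerPS_isOpen_upper hUopen hAB (hA U ⟨hUopen, hKU⟩)

/-- The principal upset of a point of `A(X)` is compact saturated. -/
def upC (C : LowerPS X) : UpperPS (LowerPS X) := by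
  refine ⟨{A : LowerPS X | C.1 ⊆ A.1}, ?_, ?_⟩
  · apply isCompact_of_finite_subcover
    intro ι U hU hcover
    have hC : C ∈ {A : LowerPS X | C.1 ⊆ A.1} := fun _ hx => hx
    obtain ⟨i, hi⟩ := mem_iUnion.1 (hcover hC)
    refine ⟨{i}, fun A hA => ?_⟩
    simp only [Finset.mem_singleton, iUnion_iUnion_eq_left]
    exact lowerPS_isOpen_upper (hU i) hA hi
  · apply Subset.antisymm
    · intro A hA U hU
      exact hU.2 hA
    · intro A hA
      by_contra hnot
      obtain ⟨x, hxC, hxA⟩ := not_subset.1 hnot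
      have hopen : IsOpen {B : LowerPS X | (B.1 ∩ A.1ᶜ).Nonempty} :=
        GenerateOpen.basic _ ⟨A.1ᶜ, A.2.isOpen_compl, rfl⟩
      have hsub : {B : LowerPS X | C.1 ⊆ B.1} ⊆ {B : LowerPS X | (B.1 ∩ A.1ᶜ).Nonempty} :=
        fun B hB => ⟨x, hB hxC, hxA⟩
      obtain ⟨y, hy1, hy2⟩ := hA _ ⟨hopen, hsub⟩
      exact hy2 hy1

lemma upC_subset_iff (C : LowerPS X) (𝒦 : UpperPS (LowerPS X)) :
    (upC C).1 ⊆ 𝒦.1 ↔ C ∈ 𝒦.1 := by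
  constructor
  · intro h; exact h (subset_rfl : C.1 ⊆ C.1)
  · intro h A hA; exact upperPS_mem_of_subset 𝒦 h hA

lemma generateOpen_sInter {α : Type*} {g : Set (Set α)} {S : Set (Set α)} (hS : S.Finite)
    (h : ∀ s ∈ S, GenerateOpen g s) : GenerateOpen g (⋂₀ S) := by
  revert h
  refine Set.Finite.induction_on (motive := fun S _ => (∀ s ∈ S, GenerateOpen g s) → GenerateOpen g (⋂₀ S)) S hS (fun _ => by simpa using GenerateOpen.univ) ?_
  intro a s _ _ ih h
  rw [sInter_insert]
  exact GenerateOpen.inter _ _ (h a (mem_insert _ _))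
    (ih fun t ht => h t (mem_insert_of_mem _ ht))

/-- Key lemma: every box set is open in the weak topology. -/
lemma box_generateOpen_weak {𝒰 : Set (LowerPS X)} (h𝒰 : IsOpen 𝒰) :
    GenerateOpen
      {S | ∃ 𝒦 : UpperPS (LowerPS X), S = {𝒦' : UpperPS (LowerPS X) | ¬ 𝒦.1 ⊆ 𝒦'.1}}
      {𝒦 : UpperPS (LowerPS X) | 𝒦.1 ⊆ 𝒰} := by
  set G₂ : Set (Set (UpperPS (LowerPS X))) :=
    {S | ∃ 𝒦 : UpperPS (LowerPS X), S = {𝒦' : UpperPS (LowerPS X) | ¬ 𝒦.1 ⊆ 𝒦'.1}} with hG₂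
  have key : ∀ 𝒦 : UpperPS (LowerPS X), 𝒦.1 ⊆ 𝒰 →
      ∃ W, GenerateOpen G₂ W ∧ 𝒦 ∈ W ∧ ∀ 𝒦' ∈ W, 𝒦'.1 ⊆ 𝒰 := by
    intro 𝒦 h𝒦
    -- basis of finite intersections of diamonds
    have hbasis := isTopologicalBasis_of_subbasis
      (rfl : (inferInstance : TopologicalSpace (LowerPS X)) = generateFrom
        {S | ∃ U : Set X, IsOpen U ∧ S = {A : LowerPS X | (A.1 ∩ U).Nonempty}})
    have hA : ∀ A : 𝒦.1, ∃ f : Set (Set (LowerPS X)), f.Finite ∧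
        f ⊆ {S | ∃ U : Set X, IsOpen U ∧ S = {A : LowerPS X | (A.1 ∩ U).Nonempty}} ∧
        (A : LowerPS X) ∈ ⋂₀ f ∧ ⋂₀ f ⊆ 𝒰 := by
      intro A
      obtain ⟨v, hv, hAv, hv𝒰⟩ := hbasis.exists_subset_of_mem_open (h𝒦 A.2) h𝒰
      obtain ⟨f, ⟨hfin, hfsub⟩, rfl⟩ := hv
      exact ⟨f, hfin, hfsub, by simpa using hAv, by simpa using hv𝒰⟩
    choose f hfin hfsub hmemf hfU using hA
    -- the sets ⋂₀ f A are open
    have hopenf : ∀ A : 𝒦.1, IsOpen (⋂₀ f A) := by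
      intro A
      exact (hfin A).isOpen_sInter fun t ht => GenerateOpen.basic _ (hfsub A ht)
    -- finite subcover
    obtain ⟨t, ht⟩ := 𝒦.2.1.elim_finite_subcover (fun A : 𝒦.1 => ⋂₀ f A) hopenf
      (fun B hB => mem_iUnion.2 ⟨⟨B, hB⟩, hmemf ⟨B, hB⟩⟩)
    -- opens of X underlying the diamonds
    have hch : ∀ (A : 𝒦.1) (S : Set (LowerPS X)), S ∈ f A →
        ∃ U : Set X, IsOpen U ∧ S = {B : LowerPS X | (B.1 ∩ U).Nonempty} :=
      fun A S hS => hfsub A hS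
    choose! u hu1 hu2 using hch
    -- selectors
    classical
    let τ := {A : 𝒦.1 // A ∈ t}
    let Sels : Set (τ → Set X) := {σ | ∀ a : τ, σ a ∈ u a.1 '' (f a.1)}
    have hSelsFin : Sels.Finite := by
      have : Sels = Set.pi univ (fun a : τ => u a.1 '' (f a.1)) := by
        ext σ; simp [Sels, Set.mem_pi]
      rw [this]
      exact Set.Finite.pi fun a => (hfin a.1).image _
    -- the closed set attached to a selector
    let C : (τ → Set X) → LowerPS X := fun σ => ⟨closure (⋂ a : τ, (σ a)ᶜ), isClosed_closure⟩
    have hCclosed : ∀ σ ∈ Sels, (C σ).1 = ⋂ a : τ, (σ a)ᶜ := by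
      intro σ hσ
      apply IsClosed.closure_eq
      apply isClosed_iInter
      intro a
      obtain ⟨S, hS, hSe⟩ := hσ a
      exact (hSe ▸ hu1 a.1 S hS).isClosed_compl
    refine ⟨⋂₀ ((fun σ => {𝒦' : UpperPS (LowerPS X) | ¬ (upC (C σ)).1 ⊆ 𝒦'.1}) '' Sels),
      ?_, ?_, ?_⟩
    · exact generateOpen_sInter (hSelsFin.image _)
        (by rintro s ⟨σ, hσ, rfl⟩; exact GenerateOpen.basic _ ⟨upC (C σ), rfl⟩)
    · -- 𝒦 belongs to the intersection
      rintro s ⟨σ, hσ, rfl⟩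
      rw [mem_setOf_eq, upC_subset_iff]
      intro hCK
      obtain ⟨A, hAt, hAC⟩ := mem_iUnion₂.1 (ht hCK)
      obtain ⟨S, hSf, hSe⟩ := hσ ⟨A, hAt⟩
      have hSe' : u A S = σ ⟨A, hAt⟩ := hSe
      have hSf' : S ∈ f A := hSf
      have hmem : C σ ∈ S := hAC S hSf'
      rw [hu2 A S hSf'] at hmem
      obtain ⟨x, hx1, hx2⟩ := hmem
      rw [hCclosed σ hσ] at hx1
      exact (mem_iInter.1 hx1 ⟨A, hAt⟩) (hSe' ▸ hx2)
    · -- the intersection is contained in the box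
      intro 𝒦' h𝒦' B hB
      by_contra hB𝒰
      have hnot : ∀ A : 𝒦.1, A ∈ t → ∃ S ∈ f A, B.1 ∩ u A S = ∅ := by
        intro A hAt
        by_contra hcon
        push_neg at hcon
        have : B ∈ ⋂₀ f A := by
          intro S hS
          rw [hu2 A S hS]
          exact hcon S hS
        exact hB𝒰 (hfU A this)
      choose S hSf hSdisj using fun a : τ => hnot a.1 a.2
      let σ : τ → Set X := fun a => u a.1 (S a)
      have hσ : σ ∈ Sels := fun a => ⟨S a, hSf a, rfl⟩
      have hBC : B.1 ⊆ (C σ).1 := by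
        refine subset_trans ?_ subset_closure
        intro x hx
        rw [mem_iInter]
        intro a
        intro hxσ
        exact absurd (hSdisj a) (nonempty_iff_ne_empty.1 ⟨x, hx, hxσ⟩)
      have hCσ : C σ ∈ 𝒦'.1 := upperPS_mem_of_subset 𝒦' hB hBC
      have := h𝒦' _ ⟨σ, hσ, rfl⟩
      exact this ((upC_subset_iff (C σ) 𝒦').2 hCσ)
  have heq : {𝒦 : UpperPS (LowerPS X) | 𝒦.1 ⊆ 𝒰}
      = ⋃₀ {W | GenerateOpen G₂ W ∧ ∀ 𝒦' ∈ W, 𝒦'.1 ⊆ 𝒰} := by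
    ext 𝒦
    constructor
    · intro h
      obtain ⟨W, h1, h2, h3⟩ := key 𝒦 h
      exact ⟨W, ⟨h1, h3⟩, h2⟩
    · rintro ⟨W, ⟨_, h3⟩, h2⟩
      exact h3 _ h2
  rw [heq]
  exact GenerateOpen.sUnion _ fun W hW => hW.1

end AuxProof

/-- The upper Vietoris topology on `K(A(X))` coincides with the weak topology, generated by
complements of principal downsets for the reverse-inclusion order. -/
theorem upperPS_lowerPS_topology_eq_weak (X : Type*) [TopologicalSpace X] :
    (inferInstance : TopologicalSpace (UpperPS (LowerPS X))) =
      .generateFrom {S | ∃ 𝒦 : UpperPS (LowerPS X),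
        S = {𝒦' : UpperPS (LowerPS X) | ¬ 𝒦.1 ⊆ 𝒦'.1}} := by
  apply le_antisymm
  · -- weak-generated opens are Vietoris-open
    rw [TopologicalSpace.le_generateFrom_iff_subset_isOpen]
    rintro s ⟨𝒦₀, rfl⟩
    have heq : {𝒦' : UpperPS (LowerPS X) | ¬ 𝒦₀.1 ⊆ 𝒦'.1}
        = ⋃₀ {S | ∃ 𝒰 : Set (LowerPS X), (IsOpen 𝒰 ∧ ¬ 𝒦₀.1 ⊆ 𝒰) ∧
            S = {𝒦' : UpperPS (LowerPS X) | 𝒦'.1 ⊆ 𝒰}} := by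
      ext 𝒦'
      constructor
      · intro h
        obtain ⟨A, hA, hA'⟩ := not_subset.1 h
        have hA'' : A ∉ ⋂₀ {U : Set (LowerPS X) | IsOpen U ∧ 𝒦'.1 ⊆ U} := by
          rw [← 𝒦'.2.2]; exact hA'
        rw [mem_sInter] at hA''
        push_neg at hA''
        obtain ⟨𝒰, ⟨ho, hsub⟩, hA𝒰⟩ := hA''
        exact ⟨_, ⟨𝒰, ⟨ho, fun hs => hA𝒰 (hs hA)⟩, rfl⟩, hsub⟩
      · rintro ⟨S, ⟨𝒰, ⟨h𝒰, hn⟩, rfl⟩, hmem⟩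
        intro hsub
        exact hn (hsub.trans hmem)
    rw [mem_setOf_eq, heq]
    apply isOpen_sUnion
    rintro S ⟨𝒰, ⟨ho, _⟩, rfl⟩
    exact TopologicalSpace.GenerateOpen.basic _ ⟨𝒰, ho, rfl⟩
  · -- Vietoris generators are weak-open
    show TopologicalSpace.generateFrom _ ≤ TopologicalSpace.generateFrom
      {S | ∃ U : Set (LowerPS X), IsOpen U ∧ S = {K : UpperPS (LowerPS X) | K.1 ⊆ U}}
    rw [TopologicalSpace.le_generateFrom_iff_subset_isOpen]
    rintro s ⟨𝒰, h𝒰, rfl⟩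
    exact box_generateOpen_weak h𝒰
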